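/- Let $v_0, v_1$ be coprime integers with $2 \le v_0 < v_1$, and let $s$ be a natural number with $s v_0 > v_1 + v_0$ and $s v_0 < (v_0 - 1) v_1$. Then there exists an integer $k \ge 1$ such that $(v_0 - 1)v_1 - s v_0 < (v_0 - 2)v_1 - k v_0 < (v_0 - 1)v_1 - (s - 1)v_0$ and $(v_0 - 2)v_1 - k v_0 \notin \langle v_0, v_1\rangle$. -/

import Mathlib

lemma mem_closure_pair (v0 v1 n : ℕ) (hn : n ∈ AddSubmonoid.closure ({v0, v1} : Set ℕ)) :
    ∃ a b : ℕ, n = a * v0 + b * v1 := by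
  induction hn using AddSubmonoid.closure_induction with
  | mem x hx =>
    simp only [Set.mem_insert_iff, Set.mem_singleton_iff] at hx
    rcases hx with rfl | rfl
    · exact ⟨1, 0, by simp⟩
    · exact ⟨0, 1, by simp⟩
  | zero => exact ⟨0, 0, by simp⟩
  | add x y _ _ hx hy =>
    obtain ⟨a, b, rfl⟩ := hx
    obtain ⟨c, d, rfl⟩ := hy
    exact ⟨a + c, b + d, by ring⟩

/-- For coprime `2 ≤ v₀ < v₁` and a natural number `s` with
`v₁ + v₀ < s v₀ < (v₀-1) v₁`, there is `k ≥ 1` with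
`(v₀-1)v₁ - s v₀ < (v₀-2)v₁ - k v₀ < (v₀-1)v₁ - (s-1)v₀` and
`(v₀-2)v₁ - k v₀ ∉ ⟨v₀, v₁⟩`. -/
theorem gap_exists_case_s (v0 v1 : ℕ) (h2 : 2 ≤ v0) (hlt : v0 < v1)
    (hcop : Nat.Coprime v0 v1) (s : ℕ)
    (hs1 : (v1 : ℤ) + (v0 : ℤ) < (s : ℤ) * (v0 : ℤ))
    (hs2 : (s : ℤ) * (v0 : ℤ) < ((v0 : ℤ) - 1) * (v1 : ℤ)) :
    ∃ k : ℤ, 1 ≤ k ∧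
      ((v0 : ℤ) - 1) * (v1 : ℤ) - (s : ℤ) * (v0 : ℤ) <
        ((v0 : ℤ) - 2) * (v1 : ℤ) - k * (v0 : ℤ) ∧
      ((v0 : ℤ) - 2) * (v1 : ℤ) - k * (v0 : ℤ) <
        ((v0 : ℤ) - 1) * (v1 : ℤ) - ((s : ℤ) - 1) * (v0 : ℤ) ∧
      ∀ n ∈ AddSubmonoid.closure ({v0, v1} : Set ℕ),
        (n : ℤ) ≠ ((v0 : ℤ) - 2) * (v1 : ℤ) - k * (v0 : ℤ) := by
  have hv0pos : (0 : ℤ) < (v0 : ℤ) := by exact_mod_cast Nat.lt_of_lt_of_le Nat.zero_lt_two h2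
  -- v0 does not divide v1
  have hndvd : ¬ (v0 ∣ v1) := by
    intro h
    have h1 : v0 ∣ Nat.gcd v0 v1 := Nat.dvd_gcd dvd_rfl h
    rw [hcop] at h1
    exact absurd (Nat.le_of_dvd Nat.one_pos h1) (by omega)
  set q : ℕ := v1 / v0 with hq
  have hmod : v1 % v0 ≠ 0 := fun h => hndvd (Nat.dvd_of_mod_eq_zero h)
  have hdiv : v0 * q + v1 % v0 = v1 := Nat.div_add_mod v1 v0
  have hmodlt : v1 % v0 < v0 := Nat.mod_lt _ (by omega)
  -- in ℤ
  have hd : (v0 : ℤ) * q + (v1 % v0 : ℕ) = (v1 : ℤ) := by exact_mod_cast hdiv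
  have he1 : (1 : ℤ) ≤ ((v1 % v0 : ℕ) : ℤ) := by exact_mod_cast Nat.one_le_iff_ne_zero.mpr hmod
  have he2 : ((v1 % v0 : ℕ) : ℤ) < (v0 : ℤ) := by exact_mod_cast hmodlt
  -- k
  refine ⟨(s : ℤ) - (q : ℤ) - 1, ?_, ?_, ?_, ?_⟩
  · -- 1 ≤ k : s v0 > v1 + v0 = q v0 + e + v0 ⇒ s ≥ q + 2
    nlinarith [hv0pos, hs1]
  · nlinarith [hv0pos]
  · nlinarith [hv0pos]
  · intro n hn heq
    obtain ⟨a, b, rfl⟩ := mem_closure_pair v0 v1 n hn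
    push_cast at heq
    -- v0 ∣ (b+2) in ℤ
    have hdvd2 : (v0 : ℤ) ∣ ((b : ℤ) + 2) * (v1 : ℤ) := by
      refine ⟨(v1 : ℤ) - (s : ℤ) + (q : ℤ) + 1 - (a : ℤ), ?_⟩
      linear_combination heq
    have hcopZ : IsCoprime (v0 : ℤ) (v1 : ℤ) := by
      rw [Int.isCoprime_iff_gcd_eq_one]
      exact_mod_cast hcop
    have hdvdb : (v0 : ℤ) ∣ ((b : ℤ) + 2) := hcopZ.dvd_of_dvd_mul_right hdvd2
    have hb2 : (v0 : ℤ) ≤ (b : ℤ) + 2 := Int.le_of_dvd (by positivity) hdvdb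
    -- then b v1 ≥ (v0-2) v1 > RHS
    have hk1 : (1 : ℤ) ≤ (s : ℤ) - (q : ℤ) - 1 := by nlinarith [hv0pos, hs1]
    have h1 : ((v0 : ℤ) - 2) * (v1 : ℤ) ≤ (b : ℤ) * (v1 : ℤ) :=
      mul_le_mul_of_nonneg_right (by linarith) (by positivity)
    have h2' : (1 : ℤ) * (v0 : ℤ) ≤ ((s : ℤ) - (q : ℤ) - 1) * (v0 : ℤ) :=
      mul_le_mul_of_nonneg_right hk1 hv0pos.le
    have h3 : (0 : ℤ) ≤ (a : ℤ) * (v0 : ℤ) := by positivity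
    linarith
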